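/- For Re(s) > 1, ∫₀^∞ β₁(2v) e^v v^{s-1} dv = Γ(s) ∫₀¹ w^{s-1}/(1+w) dw, where β₁(t) = ∫₁^∞ e^{-ut}/u du. -/

import Mathlib

open MeasureTheory Real Set

/-- The exponential integral `β₁(t) = ∫₁^∞ u⁻¹ e^{-ut} du`. -/
noncomputable def beta1 (t : ℝ) : ℝ := ∫ u in Set.Ioi (1 : ℝ), Real.exp (-u * t) / u

lemma aux_exp_int {v : ℝ} (hv : 0 < v) :
    ∫ u in Set.Ioi (1 : ℝ), Real.exp (-(v * u)) = Real.exp (-v) / v := by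
  have hderiv : ∀ x ∈ Set.Ici (1:ℝ),
      HasDerivAt (fun x => -Real.exp (-(v * x)) / v) (Real.exp (-(v * x))) x := by
    intro x _
    have h := (((hasDerivAt_id x).const_mul v).neg.exp).neg.div_const v
    refine h.congr_deriv ?_
    simp only [Pi.neg_apply, id, mul_one, mul_neg, neg_neg]
    field_simp
  have hint : IntegrableOn (fun x => Real.exp (-(v * x))) (Set.Ioi 1) := by
    simpa [neg_mul] using exp_neg_integrableOn_Ioi 1 hv
  have htend : Filter.Tendsto (fun x => -Real.exp (-(v * x)) / v) Filter.atTop (nhds 0) := by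
    have h1 : Filter.Tendsto (fun x : ℝ => v * x) Filter.atTop Filter.atTop :=
      Filter.Tendsto.const_mul_atTop hv Filter.tendsto_id
    have h2 := ((Real.tendsto_exp_neg_atTop_nhds_zero.comp h1).neg).div_const v
    simpa [Function.comp] using h2
  have := integral_Ioi_of_hasDerivAt_of_tendsto' hderiv hint htend
  rw [this]; ring_nf

noncomputable def F (s : ℝ) (v u : ℝ) : ℝ := Real.exp ((1 - 2*u) * v) * v ^ (s-1) / u

lemma F_meas (s : ℝ) : Measurable (Function.uncurry (F s)) := by
  unfold Function.uncurry F
  fun_prop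

lemma F_bound (s : ℝ) {v : ℝ} (hv : 0 < v) :
    ∀ u ∈ Set.Ioi (1:ℝ), ‖F s v u‖ ≤ Real.exp (-(v*u)) * v ^ (s-1) := by
  intro u hu
  have hu1 : (1:ℝ) < u := hu
  have h1 : Real.exp ((1 - 2*u) * v) ≤ Real.exp (-(v*u)) := by
    apply Real.exp_le_exp.mpr; nlinarith
  have h2 : 0 ≤ v ^ (s-1) := Real.rpow_nonneg hv.le _
  rw [Real.norm_eq_abs, F, abs_div, abs_mul, abs_of_nonneg (Real.exp_nonneg _),
    abs_of_nonneg h2, abs_of_pos (lt_trans one_pos hu1)]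
  calc Real.exp ((1 - 2*u) * v) * v ^ (s-1) / u
      ≤ Real.exp ((1 - 2*u) * v) * v ^ (s-1) := div_le_self (by positivity) hu1.le
    _ ≤ Real.exp (-(v*u)) * v ^ (s-1) := mul_le_mul_of_nonneg_right h1 h2

lemma F_majorant_int {v : ℝ} (s : ℝ) (hv : 0 < v) :
    IntegrableOn (fun u => Real.exp (-(v*u)) * v ^ (s-1)) (Set.Ioi 1) := by
  apply Integrable.mul_const
  simpa [neg_mul, IntegrableOn] using exp_neg_integrableOn_Ioi 1 hv

lemma F_int_u (s : ℝ) {v : ℝ} (hv : 0 < v) :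
    IntegrableOn (fun u => F s v u) (Set.Ioi 1) := by
  have hm : AEStronglyMeasurable (fun u => F s v u) (volume.restrict (Set.Ioi 1)) :=
    ((F_meas s).comp (measurable_const.prodMk measurable_id)).aestronglyMeasurable
  apply Integrable.mono' (F_majorant_int s hv) hm
  filter_upwards [ae_restrict_mem measurableSet_Ioi] with u hu
  exact F_bound s hv u hu

lemma F_int (s : ℝ) (hs : 1 < s) :
    Integrable (Function.uncurry (F s))
      ((volume.restrict (Set.Ioi 0)).prod (volume.restrict (Set.Ioi 1))) := by
  have hs1 : (0:ℝ) < s - 1 := by linarith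
  rw [integrable_prod_iff (F_meas s).aestronglyMeasurable]
  constructor
  · filter_upwards [ae_restrict_mem measurableSet_Ioi] with v hv
    exact F_int_u s hv
  · have hmaj : IntegrableOn (fun v => Real.exp (-v) * v ^ (s-2)) (Set.Ioi 0) := by
      have := Real.GammaIntegral_convergent hs1
      simpa [show s - 1 - 1 = s - 2 by ring] using this
    have hm : AEStronglyMeasurable
        (fun v => ∫ u in Set.Ioi (1:ℝ), ‖F s v u‖) (volume.restrict (Set.Ioi 0)) := by
      exact (F_meas s).aestronglyMeasurable.norm.integral_prod_right'
    apply Integrable.mono' hmaj hm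
    filter_upwards [ae_restrict_mem measurableSet_Ioi] with v hv
    have hv : (0:ℝ) < v := hv
    have h1 : (∫ u in Set.Ioi (1:ℝ), ‖F s v u‖)
        ≤ ∫ u in Set.Ioi (1:ℝ), Real.exp (-(v*u)) * v ^ (s-1) := by
      apply setIntegral_mono_on (F_int_u s hv).norm (F_majorant_int s hv) measurableSet_Ioi
      exact F_bound s hv
    have h2 : (∫ u in Set.Ioi (1:ℝ), Real.exp (-(v*u)) * v ^ (s-1))
        = Real.exp (-v) * v ^ (s-2) := by
      rw [integral_mul_const, aux_exp_int hv]
      rw [show s - 2 = (s-1) + (-1) by ring, Real.rpow_add hv, Real.rpow_neg_one]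
      field_simp
    rw [Real.norm_eq_abs, abs_of_nonneg (integral_nonneg fun u => norm_nonneg _)]
    rw [← h2]
    exact h1

theorem stmt3 (s : ℝ) (hs : 1 < s) :
    (∫ v in Set.Ioi (0 : ℝ), beta1 (2 * v) * Real.exp v * v ^ (s - 1))
      = Real.Gamma s * ∫ w in Set.Ioo (0 : ℝ) 1, w ^ (s - 1) / (1 + w) := by
  have hs0 : (0:ℝ) < s := by linarith
  have key1 : (∫ v in Set.Ioi (0:ℝ), beta1 (2 * v) * Real.exp v * v ^ (s - 1))
      = ∫ v in Set.Ioi (0:ℝ), ∫ u in Set.Ioi (1:ℝ), F s v u := by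
    apply setIntegral_congr_fun measurableSet_Ioi
    intro v hv
    simp only [beta1]
    rw [← integral_mul_const, ← integral_mul_const]
    apply setIntegral_congr_fun measurableSet_Ioi
    intro u hu
    show Real.exp (-u * (2*v)) / u * Real.exp v * v ^ (s-1) = F s v u
    rw [F, show (1 - 2*u) * v = -u * (2*v) + v by ring, Real.exp_add]
    ring
  rw [key1, MeasureTheory.integral_integral_swap (F_int s hs)]
  have key2 : (∫ u in Set.Ioi (1:ℝ), ∫ v in Set.Ioi (0:ℝ), F s v u)
      = ∫ u in Set.Ioi (1:ℝ), (1/(2*u-1)) ^ s * Real.Gamma s / u := by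
    apply setIntegral_congr_fun measurableSet_Ioi
    intro u hu
    have hu1 : (1:ℝ) < u := hu
    simp only [F]
    rw [MeasureTheory.integral_div]
    have h3 : ∀ v : ℝ, Real.exp ((1-2*u)*v) * v^(s-1) = v^(s-1) * Real.exp (-((2*u-1)*v)) := by
      intro v; rw [show (1-2*u)*v = -((2*u-1)*v) by ring]; ring
    simp_rw [h3]
    rw [integral_rpow_mul_exp_neg_mul_Ioi hs0 (by linarith : (0:ℝ) < 2*u-1)]
  rw [key2]
  -- change of variables
  set f : ℝ → ℝ := fun w => (w⁻¹ + 1)/2 with hf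
  have himg : f '' (Set.Ioo 0 1) = Set.Ioi 1 := by
    ext u
    simp only [mem_image, mem_Ioo, mem_Ioi, hf]
    constructor
    · rintro ⟨w, ⟨hw0, hw1⟩, rfl⟩
      have : 1 < w⁻¹ := (one_lt_inv_iff₀).mpr ⟨hw0, hw1⟩
      linarith
    · intro hu
      refine ⟨(2*u-1)⁻¹, ⟨inv_pos.mpr (by linarith), ?_⟩, ?_⟩
      · rw [inv_lt_one_iff₀]; right; linarith
      · rw [inv_inv]; ring
  have hderiv : ∀ w ∈ Set.Ioo (0:ℝ) 1,
      HasDerivWithinAt f (-(w^2)⁻¹/2) (Set.Ioo 0 1) w := by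
    intro w hw
    exact (((hasDerivAt_inv hw.1.ne').add_const 1).div_const 2).hasDerivWithinAt
  have hinj : Set.InjOn f (Set.Ioo 0 1) := by
    intro w1 h1 w2 h2 heq
    simp only [hf] at heq
    have : w1⁻¹ = w2⁻¹ := by linarith
    exact inv_injective this
  have hcv := integral_image_eq_integral_abs_deriv_smul measurableSet_Ioo hderiv hinj
    (fun u => (1/(2*u-1)) ^ s * Real.Gamma s / u)
  rw [himg] at hcv
  rw [hcv, ← integral_const_mul]
  apply setIntegral_congr_fun measurableSet_Ioo
  intro w hw
  obtain ⟨hw0, hw1⟩ := hw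
  have h1 : 2*((w⁻¹+1)/2)-1 = w⁻¹ := by ring
  simp only [hf, smul_eq_mul]
  rw [h1, one_div, inv_inv]
  have habs : |(-(w^2)⁻¹/2)| = (w^2)⁻¹/2 := by
    rw [abs_div, abs_neg, abs_inv, abs_of_pos (by positivity : (0:ℝ) < w^2), abs_two]
  rw [habs]
  have hws : w ^ s = w ^ (s-1) * w := by
    rw [← Real.rpow_add_one hw0.ne' (s-1)]; norm_num
  rw [hws]
  have h1w : (1:ℝ) + w ≠ 0 := by linarith
  field_simp
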